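/- Let r be the root of a rooted tree-decomposition of G, so G_r = G. For a guessing g on X_r with Z_3(g) = ∅, every partial ve-dominating set of g on G_r is a ve-dominating set of G. Consequently, γ_ve(G) equals the minimum of D(g) over all valid guessings g on X_r with Z_3(g) = ∅. -/
import Mathlib


/-- `(T, X)` is a tree-decomposition of `G`: `T` is a tree, every vertex of `G`
is in some bag, every edge of `G` has both endpoints in some common bag, and for
every node `j` on the (unique) path between nodes `i` and `k` of `T`, we have
`X i ∩ X k ⊆ X j`. -/
def IsTreeDecomp {V ι : Type*} (G : SimpleGraph V) (T : SimpleGraph ι) (X : ι → Set V) : Prop :=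
  T.IsTree ∧
  (∀ v : V, ∃ i : ι, v ∈ X i) ∧
  (∀ u v : V, G.Adj u v → ∃ i : ι, u ∈ X i ∧ v ∈ X i) ∧
  (∀ i k : ι, ∀ p : T.Walk i k, p.IsPath → ∀ j ∈ p.support, X i ∩ X k ⊆ X j)

/-- With respect to the root `r`, the node `k` lies in the subtree rooted at `j`
(i.e. `k` is `j` or a descendant of `j`): every path from `r` to `k` passes
through `j`. -/
def InSubtree {ι : Type*} (T : SimpleGraph ι) (r j k : ι) : Prop :=
  ∀ p : T.Walk r k, p.IsPath → j ∈ p.support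

/-- With respect to the root `r`, the node `j` is a child of the node `i`. -/
def IsChild {ι : Type*} (T : SimpleGraph ι) (r i j : ι) : Prop :=
  T.Adj i j ∧ InSubtree T r i j

/-- `V_i`: the union of the bags over the subtree rooted at `i`. -/
def SubtreeVerts {V ι : Type*} (T : SimpleGraph ι) (X : ι → Set V) (r i : ι) : Set V :=
  ⋃ k ∈ {k : ι | InSubtree T r i k}, X k

/-- `S` is an independent set of `G`. -/
def IsIndepSet' {V : Type*} (G : SimpleGraph V) (S : Set V) : Prop :=
  ∀ u ∈ S, ∀ v ∈ S, ¬ G.Adj u v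

/-- `Z_d(g)`: the vertices of the bag `Xi` with label `d` under the guessing `g`. -/
def Zset {V : Type*} (Xi : Set V) (g : V → ℕ) (d : ℕ) : Set V :=
  {x ∈ Xi | g x = d}

/-- `g` is a guessing on the bag `Xi`: it assigns to each vertex of `Xi`
one of the digits `1,2,3,4`. -/
def IsGuess {V : Type*} (Xi : Set V) (g : V → ℕ) : Prop :=
  ∀ x ∈ Xi, g x ∈ ({1, 2, 3, 4} : Set ℕ)

/-- The open neighborhood `N_{G[A]}(S)` of `S` in the subgraph of `G` induced by `A`. -/
def nbrIn {V : Type*} (G : SimpleGraph V) (A S : Set V) : Set V :=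
  {v ∈ A | v ∉ S ∧ ∃ s ∈ S, G.Adj s v}

/-- The closed neighborhood `N_{G[A]}[S]` of `S` in the subgraph of `G` induced by `A`. -/
def closedNbrIn {V : Type*} (G : SimpleGraph V) (A S : Set V) : Set V :=
  {v ∈ A | v ∈ S ∨ ∃ s ∈ S, G.Adj s v}

/-- `S` is a partial ve-dominating set of the guessing `g` on `G_i = G[Vi]`
(with bag `Xi`). -/
def IsPartialVeDom {V : Type*} (G : SimpleGraph V) (Vi Xi : Set V) (g : V → ℕ)
    (S : Set V) : Prop :=
  S ⊆ Vi ∧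
  S ∩ Xi = Zset Xi g 1 ∧
  Zset Xi g 2 ⊆ nbrIn G Vi S ∧
  Zset Xi g 3 ∩ closedNbrIn G Vi S = ∅ ∧
  Zset Xi g 4 ∩ closedNbrIn G Vi S = ∅ ∧
  IsIndepSet' G ((Vi \ closedNbrIn G Vi S) \ Zset Xi g 3)

/-- A guessing `g` on the bag `Xi` is valid: no edge between `Z_1(g)` and
`Z_4(g)`, no edge between `Z_1(g)` and `Z_3(g)`, and `Z_4(g)` is independent. -/
def ValidGuess {V : Type*} (G : SimpleGraph V) (Xi : Set V) (g : V → ℕ) : Prop :=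
  (∀ x ∈ Zset Xi g 1, ∀ y ∈ Zset Xi g 4, ¬ G.Adj x y) ∧
  (∀ x ∈ Zset Xi g 1, ∀ y ∈ Zset Xi g 3, ¬ G.Adj x y) ∧
  IsIndepSet' G (Zset Xi g 4)

/-- The partial ve-domination number `D(g)` of a guessing `g`: the minimum size
of a partial ve-dominating set of `g` on `G[Vi]`, or `+∞` if none exists. -/
noncomputable def Dnum {V : Type*} (G : SimpleGraph V) (Vi Xi : Set V) (g : V → ℕ) : ℕ∞ :=
  sInf {n : ℕ∞ | ∃ S : Set V, IsPartialVeDom G Vi Xi g S ∧ (S.ncard : ℕ∞) = n}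

/-- The closed neighborhood `N[D]` of a vertex set `D` in a simple graph `G`. -/
def closedNbhd {V : Type*} (G : SimpleGraph V) (D : Set V) : Set V :=
  D ∪ {v | ∃ d ∈ D, G.Adj d v}

/-- `D` is a vertex-edge dominating set. -/
def IsVeDomSet {V : Type*} (G : SimpleGraph V) (D : Set V) : Prop :=
  ∀ u v : V, G.Adj u v →
    ∃ w ∈ D, u ∈ closedNbhd G {w} ∨ v ∈ closedNbhd G {w}

/-- The ve-domination number `γ_ve(G)` (valued in `ℕ∞`). -/
noncomputable def veDomNumE {V : Type*} (G : SimpleGraph V) : ℕ∞ :=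
  sInf {n : ℕ∞ | ∃ D : Set V, IsVeDomSet G D ∧ (D.ncard : ℕ∞) = n}

/-- At the root `r` of a tree-decomposition (`G_r = G`): every partial
ve-dominating set of a guessing `g` on `X r` with `Z_3(g) = ∅` is a
ve-dominating set of `G`, and `γ_ve(G)` is the minimum of `D(g)` over all
valid guessings `g` on `X r` with `Z_3(g) = ∅`. -/
theorem root_node_gives_veDomNum
    {V ι : Type*} [Fintype V] (G : SimpleGraph V) (T : SimpleGraph ι)
    (X : ι → Set V) (r : ι) (hTD : IsTreeDecomp G T X) :
    (∀ g : V → ℕ, IsGuess (X r) g → Zset (X r) g 3 = ∅ →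
      ∀ S : Set V, IsPartialVeDom G (SubtreeVerts T X r r) (X r) g S →
        IsVeDomSet G S) ∧
    veDomNumE G = sInf {m : ℕ∞ | ∃ g : V → ℕ, IsGuess (X r) g ∧
      ValidGuess G (X r) g ∧ Zset (X r) g 3 = ∅ ∧
      m = Dnum G (SubtreeVerts T X r r) (X r) g} := by
  classical
  obtain ⟨hT, hcover, hedge, hpath⟩ := hTD
  have hVr : SubtreeVerts T X r r = Set.univ := by
    ext v
    simp only [Set.mem_univ, iff_true, SubtreeVerts, Set.mem_iUnion]
    obtain ⟨i, hi⟩ := hcover v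
    exact ⟨i, fun p hp => p.start_mem_support, hi⟩
  have hCN : ∀ S : Set V, closedNbrIn G Set.univ S = closedNbhd G S := by
    intro S
    ext v
    simp [closedNbrIn, closedNbhd]
  have part1 : ∀ g : V → ℕ, IsGuess (X r) g → Zset (X r) g 3 = ∅ →
      ∀ S : Set V, IsPartialVeDom G (SubtreeVerts T X r r) (X r) g S →
        IsVeDomSet G S := by
    intro g hg h3 S hS
    rw [hVr] at hS
    obtain ⟨-, -, -, -, -, hind⟩ := hS
    rw [hCN, h3] at hind
    intro u v huv
    by_cases hu : u ∈ closedNbhd G S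
    · rcases hu with hu | ⟨d, hd, hdu⟩
      · exact ⟨u, hu, Or.inl (Or.inl rfl)⟩
      · exact ⟨d, hd, Or.inl (Or.inr ⟨d, rfl, hdu⟩)⟩
    by_cases hv : v ∈ closedNbhd G S
    · rcases hv with hv | ⟨d, hd, hdv⟩
      · exact ⟨v, hv, Or.inr (Or.inl rfl)⟩
      · exact ⟨d, hd, Or.inr (Or.inr ⟨d, rfl, hdv⟩)⟩
    exact absurd huv (hind u ⟨⟨Set.mem_univ u, hu⟩, Set.notMem_empty u⟩
      v ⟨⟨Set.mem_univ v, hv⟩, Set.notMem_empty v⟩)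
  refine ⟨part1, le_antisymm ?_ ?_⟩
  · refine le_sInf ?_
    rintro m ⟨g, hg, hvg, h3, rfl⟩
    refine le_sInf ?_
    rintro n ⟨S, hS, hn⟩
    exact sInf_le ⟨S, part1 g hg h3 S hS, hn⟩
  · refine le_sInf ?_
    rintro n ⟨D, hD, hn⟩
    set g : V → ℕ := fun x => if x ∈ D then 1 else if x ∈ closedNbhd G D then 2 else 4 with hgdef
    have hZ1 : Zset (X r) g 1 = X r ∩ D := by
      ext x
      simp only [Zset, Set.mem_setOf_eq, Set.mem_inter_iff, hgdef]
      constructor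
      · rintro ⟨hx, hx1⟩
        refine ⟨hx, ?_⟩
        by_contra hxD
        simp only [if_neg hxD] at hx1
        split_ifs at hx1 <;> omega
      · rintro ⟨hx, hxD⟩
        exact ⟨hx, if_pos hxD⟩
    have hZ3 : Zset (X r) g 3 = ∅ := by
      ext x
      simp only [Zset, Set.mem_setOf_eq, Set.mem_empty_iff_false, iff_false, hgdef]
      rintro ⟨hx, hx3⟩
      split_ifs at hx3 <;> omega
    have hcompl : IsIndepSet' G (Set.univ \ closedNbhd G D) := by
      intro u hu v hv huv
      obtain ⟨w, hw, hcase⟩ := hD u v huv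
      rcases hcase with h | h
      · rcases h with h | ⟨d, hd, hdu⟩
        · exact hu.2 (Or.inl (h ▸ hw))
        · exact hu.2 (Or.inr ⟨d, hd ▸ hw, hdu⟩)
      · rcases h with h | ⟨d, hd, hdv⟩
        · exact hv.2 (Or.inl (h ▸ hw))
        · exact hv.2 (Or.inr ⟨d, hd ▸ hw, hdv⟩)
    have hpart : IsPartialVeDom G (SubtreeVerts T X r r) (X r) g D := by
      rw [hVr]
      refine ⟨Set.subset_univ D, ?_, ?_, ?_, ?_, ?_⟩
      · rw [hZ1, Set.inter_comm]
      · rintro x ⟨hx, hx2⟩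
        simp only [hgdef] at hx2
        by_cases hxD : x ∈ D
        · simp [if_pos hxD] at hx2
        simp only [if_neg hxD] at hx2
        by_cases hxN : x ∈ closedNbhd G D
        · rcases hxN with h | ⟨d, hd, hdx⟩
          · exact absurd h hxD
          · exact ⟨Set.mem_univ x, hxD, d, hd, hdx⟩
        · simp [if_neg hxN] at hx2
      · rw [hZ3, Set.empty_inter]
      · rw [hCN]
        ext x
        simp only [Zset, Set.mem_inter_iff, Set.mem_setOf_eq,
          Set.mem_empty_iff_false, iff_false, not_and, hgdef]
        rintro ⟨hx, hx4⟩ hxN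
        rw [if_neg, if_pos hxN] at hx4
        · omega
        · intro hxD; exact absurd (if_pos hxD ▸ hx4) (by omega)
      · rw [hCN]
        intro u hu v hv
        exact hcompl u ⟨hu.1.1, hu.1.2⟩ v ⟨hv.1.1, hv.1.2⟩
    have hguess : IsGuess (X r) g := by
      intro x hx
      simp only [hgdef]
      split_ifs <;> simp
    have hvalid : ValidGuess G (X r) g := by
      have hZ4 : Zset (X r) g 4 ⊆ Set.univ \ closedNbhd G D := by
        rintro x ⟨hx, hx4⟩
        simp only [hgdef] at hx4
        refine ⟨Set.mem_univ x, fun hxN => ?_⟩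
        rw [if_neg, if_pos hxN] at hx4
        · omega
        · intro hxD; exact absurd (if_pos hxD ▸ hx4) (by omega)
      refine ⟨?_, ?_, ?_⟩
      · intro x hx y hy hxy
        rw [hZ1] at hx
        exact (hZ4 hy).2 (Or.inr ⟨x, hx.2, hxy⟩)
      · intro x hx y hy
        rw [hZ3] at hy
        exact absurd hy (Set.notMem_empty y)
      · intro u hu v hv
        exact hcompl u (hZ4 hu) v (hZ4 hv)
    refine le_trans (sInf_le ⟨g, hguess, hvalid, hZ3, rfl⟩) ?_
    exact sInf_le ⟨D, hpart, hn⟩
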